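/- For every binary tree T of size n, a permutation σ of {1,…,n} is a linear extension of the increasing forest inc(T) if and only if σ is a linear extension of the binary search tree poset of some binary tree T' of size n with T' ≤ T in the Tamari order; that is, ExtL(inc(T)) = ⋃_{T' ≤ T} ExtL(T'). -/

import Mathlib

open Polynomial

/-- A binary tree: either the empty tree or a pair of binary trees
(left and right subtrees) grafted on an internal node. -/
inductive BinTree : Type
  | leaf : BinTree
  | node : BinTree → BinTree → BinTree

namespace BinTree

/-- The size of a binary tree: its number of internal nodes. -/
def size : BinTree → ℕ
  | leaf => 0
  | node l r => l.size + r.size + 1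

/-- One right rotation somewhere in the tree: `Rot T T'` means that `T'` is obtained
from `T` by replacing one subtree of the form `y(x(A,B),C)` by `x(A,y(B,C))`. -/
inductive Rot : BinTree → BinTree → Prop
  | root (A B C : BinTree) : Rot (node (node A B) C) (node A (node B C))
  | left {L L' : BinTree} (R : BinTree) : Rot L L' → Rot (node L R) (node L' R)
  | right (L : BinTree) {R R' : BinTree} : Rot R R' → Rot (node L R) (node L R')

/-- The Tamari order: `TamariLE T T'` iff `T'` is obtained from `T` by a (possibly empty)
sequence of right rotations. -/
def TamariLE (T T' : BinTree) : Prop := Relation.ReflTransGen Rot T T'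

/-- The Tamari polynomial `B_T ∈ ℤ[x]`: `B_∅ = 1` and for `T = x(L,R)`, `B_T` is the
unique polynomial with `(x-1)·B_T = x·B_L·(x·B_R - B_R(1))` (exact division by the
monic polynomial `X - 1`, the right-hand side vanishing at `x = 1`). -/
noncomputable def tamPoly : BinTree → Polynomial ℤ
  | leaf => 1
  | node l r =>
      (X * tamPoly l * (X * tamPoly r - C ((tamPoly r).eval 1))) /ₘ (X - C 1)

/-- The mirror Tamari polynomial, obtained by exchanging the roles of the left and
right subtrees in the recursive definition of the Tamari polynomial. -/
noncomputable def tamPolyMirror : BinTree → Polynomial ℤ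
  | leaf => 1
  | node l r =>
      (X * tamPolyMirror r * (X * tamPolyMirror l - C ((tamPolyMirror l).eval 1))) /ₘ (X - C 1)

/-- The number of nodes on the left border of a binary tree. -/
def leftBorder : BinTree → ℕ
  | leaf => 0
  | node l _ => l.leftBorder + 1

/-- The number of nodes on the right border of a binary tree. -/
def rightBorder : BinTree → ℕ
  | leaf => 0
  | node _ r => r.rightBorder + 1

/-- `inSub T a b`: in the unique binary-search-tree labelling of `T` by `1,…,size T`
(all labels of the left subtree of a node are smaller than its label, all labels of its
right subtree are larger), the node labelled `a` belongs to the subtree rooted at the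
node labelled `b` (in particular `inSub T a a` holds for every node label `a`). -/
def inSub : BinTree → ℕ → ℕ → Prop
  | leaf => fun _ _ => False
  | node l r => fun a b =>
      (b = l.size + 1 ∧ 1 ≤ a ∧ a ≤ l.size + r.size + 1) ∨
      inSub l a b ∨
      (l.size + 1 < a ∧ l.size + 1 < b ∧ inSub r (a - (l.size + 1)) (b - (l.size + 1)))

/-- The binary search tree poset of `T`: `bstRel T a b` iff `a ≺_T b`, i.e. `a ≠ b` and
the node labelled `a` is in the subtree rooted at the node labelled `b`. -/
def bstRel (T : BinTree) (a b : ℕ) : Prop := a ≠ b ∧ inSub T a b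

/-- The increasing forest `inc(T)`: `a ≺ b` iff `a < b` and `a ≺_T b`. -/
def incRel (T : BinTree) (a b : ℕ) : Prop := a < b ∧ bstRel T a b

/-- The decreasing forest `dec(T)`: `b ≺ a` iff `b > a` and `b ≺_T a`. -/
def decRel (T : BinTree) (a b : ℕ) : Prop := b < a ∧ bstRel T a b

/-- The relations of the interval-poset `IP[T,T']`: exactly those of `dec(T)`
together with those of `inc(T')`. -/
def IPrel (T T' : BinTree) (a b : ℕ) : Prop := decRel T a b ∨ incRel T' a b

end BinTree

open BinTree

/-- `σ` is a linear extension of the strict relation `rel` on `{1,…,n}`: reading the word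
`σ(1)…σ(n)` (the `i`-th letter being the label `(σ i : ℕ) + 1`), whenever `rel a b` holds
the letter `a` appears before the letter `b`. -/
def IsLinExt (n : ℕ) (rel : ℕ → ℕ → Prop) (σ : Equiv.Perm (Fin n)) : Prop :=
  ∀ i j : Fin n, rel ((σ i : ℕ) + 1) ((σ j : ℕ) + 1) → i < j

/-- An interval-poset of size `n`: a (strict) poset on `{1,…,n}` such that
`a ≺ c` implies `b ≺ c` for all `a < b < c`, and `c ≺ a` implies `b ≺ a` for all
`a < b < c`. -/
def IsIntervalPoset (n : ℕ) (rel : ℕ → ℕ → Prop) : Prop :=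
  (∀ a b, rel a b → 1 ≤ a ∧ a ≤ n ∧ 1 ≤ b ∧ b ≤ n) ∧
  (∀ a, ¬ rel a a) ∧
  (∀ a b c, rel a b → rel b c → rel a c) ∧
  (∀ a b c, a < b → b < c → rel a c → rel b c) ∧
  (∀ a b c, a < b → b < c → rel c a → rel b a)

/-- `trees(P)` : the number of connected components of the forest formed by the decreasing
relations of `P`, i.e. the number of `k ∈ {1,…,n}` such that there is no `j < k`
with `k ≺_P j`. -/
noncomputable def treeStat (n : ℕ) (rel : ℕ → ℕ → Prop) : ℕ :=
  Set.ncard {k : ℕ | 1 ≤ k ∧ k ≤ n ∧ ∀ j, j < k → ¬ rel k j}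

/-- The composition `𝔹(I1,I2)` of two interval-posets of sizes `k1` and `k2`:
the set of interval-posets `I` of size `k1+k2+1` such that
(i) the relations of `I` among `1,…,k1` are exactly those of `I1`,
(ii) the relations of `I` among `k1+2,…,k1+k2+1` are exactly those of `I2` shifted
by `k1+1`, (iii) `i ≺_I k1+1` for all `i ≤ k1`, and (iv) there is no relation
`k1+1 ≺_I j` for `j > k1+1`. -/
def Comp (k1 k2 : ℕ) (I1 I2 : ℕ → ℕ → Prop) : Set (ℕ → ℕ → Prop) :=
  {I | IsIntervalPoset (k1 + k2 + 1) I ∧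
    (∀ a b, 1 ≤ a → a ≤ k1 → 1 ≤ b → b ≤ k1 → (I a b ↔ I1 a b)) ∧
    (∀ a b, k1 + 2 ≤ a → a ≤ k1 + k2 + 1 → k1 + 2 ≤ b → b ≤ k1 + k2 + 1 →
      (I a b ↔ I2 (a - (k1 + 1)) (b - (k1 + 1)))) ∧
    (∀ i, 1 ≤ i → i ≤ k1 → I i (k1 + 1)) ∧
    (∀ j, k1 + 1 < j → ¬ I (k1 + 1) j)}

/-- The co-inversions of a permutation `σ` of `{1,…,n}` (written as the word
`σ(1)…σ(n)`): pairs `(σ(i), σ(j))` with `i < j` and `σ(i) > σ(j)`. -/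
def coinv (n : ℕ) (σ : Equiv.Perm (Fin n)) : Set (Fin n × Fin n) :=
  {p | ∃ i j : Fin n, i < j ∧ σ j < σ i ∧ p = (σ i, σ j)}

/-! ### Auxiliary development: left/right subtree sizes -/

namespace BinTree

/-- Size of the left subtree of the node labelled `b`. -/
def lsz : BinTree → ℕ → ℕ
  | leaf, _ => 0
  | node l r, b =>
    if b ≤ l.size then lsz l b
    else if b = l.size + 1 then l.size
    else lsz r (b - (l.size + 1))

/-- Size of the right subtree of the node labelled `b`. -/
def rsz : BinTree → ℕ → ℕ
  | leaf, _ => 0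
  | node l r, b =>
    if b ≤ l.size then rsz l b
    else if b = l.size + 1 then r.size
    else rsz r (b - (l.size + 1))

lemma lsz_node_le {l r : BinTree} {b : ℕ} (h : b ≤ l.size) : lsz (node l r) b = lsz l b := by
  simp only [lsz]; rw [if_pos h]

lemma lsz_node_eq {l r : BinTree} : lsz (node l r) (l.size + 1) = l.size := by
  simp [lsz]

lemma lsz_node_gt {l r : BinTree} {b : ℕ} (h : l.size + 1 < b) :
    lsz (node l r) b = lsz r (b - (l.size + 1)) := by
  simp only [lsz]; rw [if_neg (by omega), if_neg (by omega)]

lemma lsz_out : ∀ (T : BinTree) (b : ℕ), T.size < b → lsz T b = 0 := by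
  intro T
  induction T with
  | leaf => intro b _; rfl
  | node l r ihl ihr =>
    intro b hb
    simp only [size] at hb
    rw [lsz_node_gt (by omega)]
    exact ihr _ (by omega)

lemma lsz_zero : ∀ (T : BinTree), lsz T 0 = 0 := by
  intro T
  induction T with
  | leaf => rfl
  | node l r ihl ihr => rw [lsz_node_le (Nat.zero_le _)]; exact ihl

lemma lsz_lt : ∀ (T : BinTree) (b : ℕ), 1 ≤ b → b ≤ T.size → lsz T b < b := by
  intro T
  induction T with
  | leaf => intro b h1 h2; simp [size] at h2; omega
  | node l r ihl ihr =>
    intro b h1 h2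
    simp only [size] at h2
    by_cases hb : b ≤ l.size
    · rw [lsz_node_le hb]; exact ihl _ h1 hb
    · by_cases hb' : b = l.size + 1
      · subst hb'; rw [lsz_node_eq]; omega
      · rw [lsz_node_gt (by omega)]
        have := ihr (b - (l.size + 1)) (by omega) (by omega)
        omega

lemma add_rsz_le : ∀ (T : BinTree) (b : ℕ), 1 ≤ b → b ≤ T.size → b + rsz T b ≤ T.size := by
  intro T
  induction T with
  | leaf => intro b h1 h2; simp [size] at h2; omega
  | node l r ihl ihr =>
    intro b h1 h2
    simp only [size] at h2 ⊢
    simp only [rsz]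
    by_cases hb : b ≤ l.size
    · rw [if_pos hb]; have := ihl _ h1 hb; omega
    · rw [if_neg hb]
      by_cases hb' : b = l.size + 1
      · rw [if_pos hb']; omega
      · rw [if_neg hb']
        have := ihr (b - (l.size + 1)) (by omega) (by omega)
        omega

lemma inSub_iff : ∀ (T : BinTree) (a b : ℕ),
    inSub T a b ↔ 1 ≤ a ∧ 1 ≤ b ∧ b ≤ T.size ∧ b - lsz T b ≤ a ∧ a ≤ b + rsz T b := by
  intro T
  induction T with
  | leaf => intro a b; simp [inSub, size]; omega
  | node l r ihl ihr =>
    intro a b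
    simp only [inSub, size, lsz, rsz]
    by_cases hb : b ≤ l.size
    · rw [if_pos hb, if_pos hb]
      have hlsz := lsz_lt l b
      have hrsz := add_rsz_le l b
      constructor
      · rintro (⟨h1, _, _⟩ | h | ⟨_, h2, _⟩)
        · omega
        · have := (ihl a b).mp h; omega
        · omega
      · intro h
        refine Or.inr (Or.inl ((ihl a b).mpr ?_))
        omega
    · rw [if_neg hb, if_neg hb]
      by_cases hb' : b = l.size + 1
      · rw [if_pos hb', if_pos hb']
        constructor
        · rintro (⟨h1, h2, h3⟩ | h | ⟨_, h2, _⟩)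
          · omega
          · have := (ihl a b).mp h; omega
          · omega
        · intro h; exact Or.inl ⟨hb', by omega, by omega⟩
      · rw [if_neg hb', if_neg hb']
        have hlsz := lsz_lt r (b - (l.size + 1))
        have hrsz := add_rsz_le r (b - (l.size + 1))
        constructor
        · rintro (⟨h1, _, _⟩ | h | ⟨h1, h2, h3⟩)
          · omega
          · have := (ihl a b).mp h; omega
          · have := (ihr (a - (l.size + 1)) (b - (l.size + 1))).mp h3
            omega
        · intro ⟨h1, h2, h3, h4, h5⟩
          refine Or.inr (Or.inr ⟨?_, by omega, (ihr _ _).mpr ?_⟩)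
          · have : lsz r (b - (l.size + 1)) < b - (l.size + 1) := hlsz (by omega) (by omega)
            omega
          · have h6 : lsz r (b - (l.size + 1)) < b - (l.size + 1) := hlsz (by omega) (by omega)
            have h7 := hrsz (by omega) (by omega)
            omega

lemma inSub_bounds {T : BinTree} {a b : ℕ} (h : inSub T a b) :
    1 ≤ a ∧ a ≤ T.size ∧ 1 ≤ b ∧ b ≤ T.size := by
  rw [inSub_iff] at h
  have := add_rsz_le T b (by omega) (by omega)
  omega

lemma inSub_trans : ∀ (T : BinTree) (a b c : ℕ), inSub T a b → inSub T b c → inSub T a c := by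
  intro T
  induction T with
  | leaf => intro a b c h _; exact h.elim
  | node l r ihl ihr =>
    intro a b c h1 h2
    rcases h2 with ⟨hc, hb1, hb2⟩ | h2 | ⟨hb, hc, h2⟩
    · have := inSub_bounds h1
      simp only [size] at this
      exact Or.inl ⟨hc, by omega, by omega⟩
    · -- b is in the left subtree
      have hbl := inSub_bounds h2
      rcases h1 with ⟨hb', _, _⟩ | h1 | ⟨_, hb', _⟩
      · omega
      · exact Or.inr (Or.inl (ihl _ _ _ h1 h2))
      · omega
    · -- b is in the right subtree
      rcases h1 with ⟨hb', _, _⟩ | h1 | ⟨ha', hb', h1⟩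
      · omega
      · have := inSub_bounds h1; omega
      · exact Or.inr (Or.inr ⟨ha', hc, ihr _ _ _ h1 h2⟩)

lemma sub_interval {T : BinTree} {x y : ℕ} (h : inSub T x y) :
    y - lsz T y ≤ x - lsz T x := by
  have hb := inSub_bounds h
  have hx := lsz_lt T x (by omega) (by omega)
  have hax : inSub T (x - lsz T x) x := by
    rw [inSub_iff]
    refine ⟨by omega, by omega, by omega, le_rfl, by omega⟩
  have := (inSub_iff T _ y).mp (inSub_trans T _ x y hax h)
  omega

lemma incRel_iff (T : BinTree) (a b : ℕ) :
    incRel T a b ↔ 1 ≤ a ∧ a < b ∧ b ≤ T.size ∧ b - lsz T b ≤ a := by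
  unfold incRel bstRel
  rw [inSub_iff]
  constructor
  · rintro ⟨h1, _, h2⟩; omega
  · rintro ⟨h1, h2, h3, h4⟩
    exact ⟨h2, by omega, by omega, by omega, h3, h4, by omega⟩

lemma size_eq_zero {T : BinTree} (h : T.size = 0) : T = leaf := by
  cases T with
  | leaf => rfl
  | node l r => simp [size] at h

end BinTree
namespace BinTree

lemma rot_size {T T' : BinTree} (h : Rot T T') : T'.size = T.size := by
  induction h with
  | root A B C => simp only [size]; omega
  | left R _ ih => simp only [size]; omega
  | right L _ ih => simp only [size]; omega

lemma rot_lsz {T T' : BinTree} (h : Rot T T') : ∀ b, lsz T' b ≤ lsz T b := by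
  induction h with
  | root A B C =>
    intro b
    rcases lt_trichotomy b (A.size + 1) with hb | hb | hb
    · by_cases h0 : b ≤ A.size
      · rw [lsz_node_le h0, lsz_node_le (by simp only [size]; omega),
          lsz_node_le (show b ≤ A.size from h0)]
      · omega
    · subst hb
      rw [lsz_node_eq, lsz_node_le (by simp only [size]; omega), lsz_node_eq]
    · rcases lt_trichotomy b (A.size + B.size + 2) with hb2 | hb2 | hb2
      · rw [lsz_node_gt hb, lsz_node_le (show b - (A.size+1) ≤ B.size by omega),
          lsz_node_le (show b ≤ size (node A B) by simp only [size]; omega),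
          lsz_node_gt (show A.size + 1 < b from hb)]
      · subst hb2
        rw [lsz_node_gt hb, show A.size + B.size + 2 - (A.size + 1) = B.size + 1 by omega,
          lsz_node_eq,
          show A.size + B.size + 2 = size (node A B) + 1 from rfl,
          lsz_node_eq]
        simp only [size]; omega
      · rw [lsz_node_gt hb, lsz_node_gt (show size (node A B) + 1 < b by simp only [size]; omega),
          lsz_node_gt (show B.size + 1 < b - (A.size + 1) by omega)]
        simp only [size]
        rw [show b - (A.size+1) - (B.size + 1) = b - (A.size + B.size + 1 + 1) by omega]
  | left R hrot ih =>
    rename_i L L'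
    intro b
    have hs : L'.size = L.size := rot_size hrot
    rcases lt_trichotomy b (L.size + 1) with hb | hb | hb
    · by_cases h0 : b ≤ L.size
      · rw [lsz_node_le h0, lsz_node_le (by omega : b ≤ L'.size)]; exact ih b
      · omega
    · subst hb
      rw [lsz_node_eq, show L.size + 1 = L'.size + 1 by omega, lsz_node_eq]; omega
    · rw [lsz_node_gt hb, lsz_node_gt (show L'.size + 1 < b by omega), hs]
  | right L hrot ih =>
    intro b
    rcases lt_trichotomy b (L.size + 1) with hb | hb | hb
    · by_cases h0 : b ≤ L.size
      · rw [lsz_node_le h0, lsz_node_le h0]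
      · omega
    · subst hb; rw [lsz_node_eq, lsz_node_eq]
    · rw [lsz_node_gt hb, lsz_node_gt hb]; exact ih _

lemma tamari_size {T' T : BinTree} (h : TamariLE T' T) : T.size = T'.size := by
  induction h with
  | refl => rfl
  | tail _ h2 ih => rw [rot_size h2, ih]

lemma tamari_lsz {T' T : BinTree} (h : TamariLE T' T) : ∀ b, lsz T b ≤ lsz T' b := by
  induction h with
  | refl => intro b; exact le_rfl
  | tail _ h2 ih => intro b; exact le_trans (rot_lsz h2 b) (ih b)

end BinTree
namespace BinTree

lemma root_le (A B A' B' : BinTree) (hs : (node A B).size = (node A' B').size)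
    (h : ∀ b, lsz (node A B) b = lsz (node A' B') b) : A.size ≤ A'.size := by
  by_contra hlt
  push_neg at hlt
  have h1 : lsz (node A B) (A.size + 1) = A.size := lsz_node_eq
  have h2 : lsz (node A' B') (A.size + 1) = lsz B' (A.size + 1 - (A'.size + 1)) :=
    lsz_node_gt (by omega)
  simp only [size] at hs
  have h3 := lsz_lt B' (A.size + 1 - (A'.size + 1)) (by omega) (by omega)
  have h4 := h (A.size + 1)
  omega

lemma lsz_ext : ∀ (T T' : BinTree), T.size = T'.size → (∀ b, lsz T b = lsz T' b) → T = T' := by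
  intro T
  induction T with
  | leaf => intro T' hs _; exact (size_eq_zero hs.symm).symm
  | node l r ihl ihr =>
    intro T' hs h
    cases T' with
    | leaf => simp [size] at hs
    | node l' r' =>
      have e1 : l.size = l'.size :=
        le_antisymm (root_le l r l' r' hs h) (root_le l' r' l r hs.symm fun b => (h b).symm)
      simp only [size] at hs
      have hl : l = l' := by
        apply ihl l' e1
        intro b
        rcases Nat.lt_or_ge b 1 with hb | hb
        · have hb0 : b = 0 := by omega
          rw [hb0, lsz_zero, lsz_zero]
        · rcases le_or_gt b l.size with hb2 | hb2
          · have := h b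
            rwa [lsz_node_le hb2, lsz_node_le (by omega : b ≤ l'.size)] at this
          · rw [lsz_out l b hb2, lsz_out l' b (by omega)]
      have hr : r = r' := by
        apply ihr r' (by omega)
        intro b
        rcases Nat.lt_or_ge b 1 with hb | hb
        · have hb0 : b = 0 := by omega
          rw [hb0, lsz_zero, lsz_zero]
        · rcases le_or_gt b r.size with hb2 | hb2
          · have := h (b + (l.size + 1))
            rw [lsz_node_gt (by omega), lsz_node_gt (by omega)] at this
            rw [show b + (l.size + 1) - (l.size + 1) = b by omega] at this
            rw [show b + (l.size + 1) - (l'.size + 1) = b by omega] at this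
            exact this
          · rw [lsz_out r b hb2, lsz_out r' b (by omega)]
      rw [hl, hr]

lemma rot_root_lsz_eq (A B C : BinTree) :
    lsz (node A (node B C)) (A.size + B.size + 2) = B.size := by
  rw [lsz_node_gt (by omega), show A.size + B.size + 2 - (A.size + 1) = B.size + 1 by omega,
    lsz_node_eq]

lemma rot_root_lsz_ne (A B C : BinTree) (b : ℕ) (hb : b ≠ A.size + B.size + 2) :
    lsz (node A (node B C)) b = lsz (node (node A B) C) b := by
  have hAB : (node A B).size = A.size + B.size + 1 := rfl
  rcases le_or_gt b A.size with h1 | h1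
  · rw [lsz_node_le h1, lsz_node_le (show b ≤ (node A B).size by omega), lsz_node_le h1]
  · rcases Nat.lt_trichotomy b (A.size + 1) with h2 | h2 | h2
    · omega
    · subst h2
      rw [lsz_node_eq, lsz_node_le (show A.size + 1 ≤ (node A B).size by omega), lsz_node_eq]
    · rcases Nat.lt_or_ge b (A.size + B.size + 2) with h3 | h3
      · rw [lsz_node_gt h2, lsz_node_le (show b - (A.size + 1) ≤ B.size by omega),
          lsz_node_le (show b ≤ (node A B).size by omega), lsz_node_gt h2]
      · have h4 : A.size + B.size + 2 < b := by omega
        rw [lsz_node_gt h2, lsz_node_gt (show B.size + 1 < b - (A.size + 1) by omega),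
          lsz_node_gt (show (node A B).size + 1 < b by omega), hAB,
          show b - (A.size + 1) - (B.size + 1) = b - (A.size + B.size + 1 + 1) by omega]

lemma rotateAt : ∀ (T : BinTree) (y : ℕ), 1 ≤ y → y ≤ T.size → 1 ≤ lsz T y →
    ∃ x T'', Rot T T'' ∧ 1 ≤ x ∧ x < y ∧ x - lsz T x = y - lsz T y ∧ lsz T x < lsz T y ∧
      lsz T'' y = y - 1 - x ∧ ∀ b, b ≠ y → lsz T'' b = lsz T b := by
  intro T
  induction T with
  | leaf => intro y h1 h2 _; simp [size] at h2; omega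
  | node l r ihl ihr =>
    intro y hy1 hy2 hl
    simp only [size] at hy2
    rcases Nat.lt_trichotomy y (l.size + 1) with hy | hy | hy
    · -- y in the left subtree
      have hyl : y ≤ l.size := by omega
      rw [lsz_node_le hyl] at hl
      obtain ⟨x, l'', hrot, hx1, hx2, hx3, hx4, hx5, hx6⟩ := ihl y hy1 hyl hl
      have hsz : l''.size = l.size := rot_size hrot
      refine ⟨x, node l'' r, Rot.left r hrot, hx1, hx2, ?_, ?_, ?_, ?_⟩
      · rw [lsz_node_le (by omega : x ≤ l.size), lsz_node_le hyl]; exact hx3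
      · rw [lsz_node_le (by omega : x ≤ l.size), lsz_node_le hyl]; exact hx4
      · rw [lsz_node_le (by omega : y ≤ l''.size)]; exact hx5
      · intro b hb
        rcases Nat.lt_trichotomy b (l.size + 1) with hb' | hb' | hb'
        · rw [lsz_node_le (by omega : b ≤ l''.size), lsz_node_le (by omega : b ≤ l.size)]
          exact hx6 b hb
        · subst hb'
          have e1 : lsz (node l'' r) (l.size + 1) = l''.size := by
            rw [show l.size + 1 = l''.size + 1 by omega]; exact lsz_node_eq
          rw [e1, lsz_node_eq, hsz]
        · rw [lsz_node_gt (by omega : l''.size + 1 < b), lsz_node_gt hb', hsz]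
    · -- y is the root
      subst hy
      rw [lsz_node_eq] at hl
      cases l with
      | leaf => simp [size] at hl
      | node A B =>
        have hAB : (node A B).size = A.size + B.size + 1 := rfl
        refine ⟨A.size + 1, node A (node B r), Rot.root A B r, by omega, by omega, ?_, ?_, ?_, ?_⟩
        · rw [lsz_node_le (show A.size + 1 ≤ (node A B).size by omega), lsz_node_eq,
            lsz_node_eq]
          omega
        · rw [lsz_node_le (show A.size + 1 ≤ (node A B).size by omega), lsz_node_eq,
            lsz_node_eq]
          omega
        · rw [hAB, show A.size + B.size + 1 + 1 = A.size + B.size + 2 from rfl,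
            rot_root_lsz_eq]
          omega
        · intro b hb
          rw [hAB] at hb
          exact rot_root_lsz_ne A B r b (by omega)
    · -- y in the right subtree
      have h1 : 1 ≤ y - (l.size + 1) := by omega
      have h2 : y - (l.size + 1) ≤ r.size := by omega
      rw [lsz_node_gt hy] at hl
      obtain ⟨x', r'', hrot, hx1, hx2, hx3, hx4, hx5, hx6⟩ := ihr (y - (l.size + 1)) h1 h2 hl
      have hlt : lsz r x' < x' := lsz_lt r x' hx1 (by omega)
      have hlt2 : lsz r (y - (l.size + 1)) < y - (l.size + 1) := lsz_lt r _ h1 h2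
      refine ⟨x' + (l.size + 1), node l r'', Rot.right l hrot, by omega, by omega, ?_, ?_, ?_, ?_⟩
      · rw [lsz_node_gt (show l.size + 1 < x' + (l.size + 1) by omega), lsz_node_gt hy,
          show x' + (l.size + 1) - (l.size + 1) = x' by omega]
        omega
      · rw [lsz_node_gt (show l.size + 1 < x' + (l.size + 1) by omega), lsz_node_gt hy,
          show x' + (l.size + 1) - (l.size + 1) = x' by omega]
        exact hx4
      · rw [lsz_node_gt hy]
        omega
      · intro b hb
        rcases Nat.lt_trichotomy b (l.size + 1) with hb' | hb' | hb'
        · rw [lsz_node_le (by omega : b ≤ l.size), lsz_node_le (by omega : b ≤ l.size)]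
        · subst hb'; rw [lsz_node_eq, lsz_node_eq]
        · rw [lsz_node_gt hb', lsz_node_gt hb']
          exact hx6 (b - (l.size + 1)) (by omega)

lemma tamari_of_lsz_le_aux (T : BinTree) :
    ∀ (N : ℕ) (T' : BinTree), (∑ b ∈ Finset.range (T.size + 1), (lsz T' b - lsz T b)) ≤ N →
      T.size = T'.size → (∀ b, lsz T b ≤ lsz T' b) → TamariLE T' T := by
  intro N
  induction N with
  | zero =>
    intro T' hsum hs h
    have heq : ∀ b, lsz T b = lsz T' b := by
      intro b
      rcases le_or_gt b T.size with hb | hb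
      · have hmem : b ∈ Finset.range (T.size + 1) := Finset.mem_range.mpr (by omega)
        have := Finset.sum_eq_zero_iff.mp (Nat.le_zero.mp hsum) b hmem
        have := h b
        omega
      · rw [lsz_out T b hb, lsz_out T' b (by omega)]
    rw [lsz_ext T T' hs heq]
    exact Relation.ReflTransGen.refl
  | succ N ih =>
    intro T' hsum hs h
    by_cases hEq : ∀ b, lsz T' b ≤ lsz T b
    · have heq : ∀ b, lsz T b = lsz T' b := fun b => le_antisymm (h b) (hEq b)
      rw [lsz_ext T T' hs heq]
      exact Relation.ReflTransGen.refl
    · push_neg at hEq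
      obtain ⟨b0, hb0⟩ := hEq
      have claim : ∀ y, lsz T y < lsz T' y →
          ∃ T'', Rot T' T'' ∧ (∀ b, lsz T b ≤ lsz T'' b) ∧ (∀ b, lsz T'' b ≤ lsz T' b) ∧
            ∃ y', lsz T'' y' < lsz T' y' := by
        intro y
        induction y using Nat.strong_induction_on with
        | _ y ih2 =>
          intro hbad
          have hy1 : 1 ≤ y := by
            rcases Nat.eq_zero_or_pos y with h0 | h0
            · rw [h0, lsz_zero, lsz_zero] at hbad; omega
            · exact h0
          have hy2 : y ≤ T'.size := by
            by_contra hc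
            push_neg at hc
            rw [lsz_out T' y hc] at hbad
            omega
          obtain ⟨x, T'', hrot, hx1, hx2, hx3, hx4, hx5, hx6⟩ :=
            rotateAt T' y hy1 hy2 (by omega)
          have hlx' : lsz T' x < x := lsz_lt T' x hx1 (by omega)
          have hly' : lsz T' y < y := lsz_lt T' y hy1 hy2
          by_cases hcase : lsz T y ≤ y - 1 - x
          · refine ⟨T'', hrot, ?_, ?_, ⟨y, ?_⟩⟩
            · intro b
              by_cases hb : b = y
              · subst hb; rw [hx5]; exact hcase
              · rw [hx6 b hb]; exact h b
            · intro b
              by_cases hb : b = y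
              · subst hb; rw [hx5]; omega
              · rw [hx6 b hb]
            · rw [hx5]; omega
          · push_neg at hcase
            have hxT : x ≤ T.size := by omega
            have hlxT : lsz T x < x := lsz_lt T x hx1 hxT
            have hxy : inSub T x y := by
              rw [inSub_iff]
              exact ⟨hx1, hy1, by omega, by omega, by omega⟩
            have hsub := sub_interval hxy
            have hlyT : lsz T y < y := lsz_lt T y hy1 (by omega)
            have hxbad : lsz T x < lsz T' x := by omega
            exact ih2 x hx2 hxbad
      obtain ⟨T'', hrot, hge, hle, y', hy'⟩ := claim b0 (by omega)
      have hs'' : T.size = T''.size := by rw [hs, ← rot_size hrot]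
      have hy'range : y' ∈ Finset.range (T.size + 1) := by
        rw [Finset.mem_range]
        by_contra hc
        push_neg at hc
        rw [lsz_out T' y' (by omega)] at hy'
        omega
      have hsum' : (∑ b ∈ Finset.range (T.size + 1), (lsz T'' b - lsz T b)) <
          ∑ b ∈ Finset.range (T.size + 1), (lsz T' b - lsz T b) := by
        apply Finset.sum_lt_sum
        · intro b _
          have := hle b; have := h b; omega
        · refine ⟨y', hy'range, ?_⟩
          have := hge y'; have := h y'; omega
      exact Relation.ReflTransGen.head hrot (ih T'' (by omega) hs'' hge)

lemma tamari_of_lsz_le (T T' : BinTree) (hs : T.size = T'.size)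
    (h : ∀ b, lsz T b ≤ lsz T' b) : TamariLE T' T :=
  tamari_of_lsz_le_aux T _ T' le_rfl hs h

end BinTree
namespace BinTree

/-! ### The binary search tree of a word (root = last letter) -/

lemma filter_indexOf_lt (p : ℕ → Bool) :
    ∀ (u : List ℕ) (c b : ℕ), c ∈ u.filter p → b ∈ u.filter p →
      (List.idxOf c (u.filter p) < List.idxOf b (u.filter p) ↔
        List.idxOf c u < List.idxOf b u) := by
  intro u
  induction u with
  | nil => intro c b hc _; simp at hc
  | cons a u ih =>
    intro c b hc hb
    rcases eq_or_ne c b with rfl | hcb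
    · simp
    by_cases hpa : p a
    · rw [List.filter_cons_of_pos hpa] at hc hb ⊢
      rcases eq_or_ne a c with rfl | hac
      · rw [List.idxOf_cons_self, List.idxOf_cons_self,
          List.idxOf_cons_ne _ (by exact hcb ∘ Eq.symm ∘ Eq.symm : a ≠ b),
          List.idxOf_cons_ne _ (show a ≠ b from fun h => hcb (h ▸ rfl))]
        omega
      · rcases eq_or_ne a b with rfl | hab
        · rw [List.idxOf_cons_self, List.idxOf_cons_self,
            List.idxOf_cons_ne _ hac, List.idxOf_cons_ne _ hac]
          omega
        · rw [List.idxOf_cons_ne _ hac, List.idxOf_cons_ne _ hab,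
            List.idxOf_cons_ne _ hac, List.idxOf_cons_ne _ hab]
          have hc' : c ∈ u.filter p := by
            rcases List.mem_cons.mp hc with h | h
            · exact absurd h.symm hac
            · exact h
          have hb' : b ∈ u.filter p := by
            rcases List.mem_cons.mp hb with h | h
            · exact absurd h.symm hab
            · exact h
          have := ih c b hc' hb'
          omega
    · rw [List.filter_cons_of_neg (by simpa using hpa)] at hc hb ⊢
      have hac : a ≠ c := by
        rintro rfl
        exact hpa (List.of_mem_filter hc)
      have hab : a ≠ b := by
        rintro rfl
        exact hpa (List.of_mem_filter hb)
      rw [List.idxOf_cons_ne _ hac, List.idxOf_cons_ne _ hab]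
      have := ih c b hc hb
      omega

lemma map_sub_indexOf (v : ℕ) :
    ∀ (s : List ℕ) (x : ℕ), (∀ a ∈ s, v < a) → v < x →
      List.idxOf (x - v) (s.map (fun c => c - v)) = List.idxOf x s := by
  intro s
  induction s with
  | nil => intro x _ _; rfl
  | cons a s ih =>
    intro x hs hx
    rcases eq_or_ne a x with rfl | hax
    · simp
    · have ha : v < a := hs a (List.mem_cons_self)
      have h2 : a - v ≠ x - v := by omega
      rw [List.map_cons, List.idxOf_cons_ne _ h2, List.idxOf_cons_ne _ hax,
        ih x (fun y hy => hs y (List.mem_cons_of_mem a hy)) hx]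

lemma length_of_perm_list {s : List ℕ} {k : ℕ} (hn : s.Nodup)
    (hm : ∀ x, x ∈ s ↔ 1 ≤ x ∧ x ≤ k) : s.length = k := by
  have h1 : s.toFinset = Finset.Icc 1 k := by
    ext x
    simp only [List.mem_toFinset, Finset.mem_Icc, hm x]
  have h2 := List.toFinset_card_of_nodup hn
  rw [h1, Nat.card_Icc] at h2
  omega

/-- The binary search tree of a word: the root is the last letter, and the subtrees are
built recursively from the letters smaller resp. larger than it (the latter shifted). -/
def treeOf (w : List ℕ) : BinTree :=
  if h : w = [] then leaf
  else
    node (treeOf (w.dropLast.filter (fun c => decide (c < w.getLast h))))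
      (treeOf ((w.dropLast.filter (fun c => decide (w.getLast h < c))).map
        (fun c => c - w.getLast h)))
termination_by w.length
decreasing_by
  all_goals
    have h1 : w.dropLast.length < w.length := by
      rw [List.length_dropLast]
      have := List.length_pos_iff.mpr h
      omega
  · exact lt_of_le_of_lt (List.length_filter_le _ _) h1
  · rw [List.length_map]
    exact lt_of_le_of_lt (List.length_filter_le _ _) h1

lemma treeOf_nil : treeOf [] = leaf := by
  rw [treeOf]
  rfl

lemma treeOf_concat (u : List ℕ) (v : ℕ) :
    treeOf (u ++ [v]) = node (treeOf (u.filter (fun c => decide (c < v))))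
      (treeOf ((u.filter (fun c => decide (v < c))).map (fun c => c - v))) := by
  rw [treeOf]
  have h : u ++ [v] ≠ [] := by simp
  rw [dif_neg h]
  have h1 : (u ++ [v]).getLast h = v := List.getLast_append_singleton u
  have h2 : (u ++ [v]).dropLast = u := List.dropLast_concat
  rw [h1, h2]

lemma treeOf_size_aux : ∀ (N : ℕ) (w : List ℕ), w.length ≤ N → w.Nodup →
    (∀ x, x ∈ w ↔ 1 ≤ x ∧ x ≤ w.length) → (treeOf w).size = w.length := by
  intro N
  induction N with
  | zero =>
    intro w h _ _
    have : w = [] := List.eq_nil_of_length_eq_zero (by omega)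
    subst this
    rw [treeOf_nil]
    rfl
  | succ N ih =>
    intro w hlen hnd hmem
    rcases List.eq_nil_or_concat w with rfl | ⟨u, v, huv⟩
    · rw [treeOf_nil]; rfl
    · rw [List.concat_eq_append] at huv
      subst huv
      have hn : (u ++ [v]).length = u.length + 1 := by simp
      set n := u.length + 1 with hn'
      rw [hn] at hlen hmem
      have hv : 1 ≤ v ∧ v ≤ n := (hmem v).mp (by simp)
      rw [List.nodup_append] at hnd
      have hndu : u.Nodup := hnd.1
      have hvu : v ∉ u := by
        intro hc
        exact hnd.2.2 v hc v (List.mem_singleton.mpr rfl) rfl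
      have hu_mem : ∀ x, x ∈ u ↔ (1 ≤ x ∧ x ≤ n ∧ x ≠ v) := by
        intro x
        constructor
        · intro hx
          have := (hmem x).mp (by simp [hx])
          exact ⟨this.1, this.2, fun h => hvu (h ▸ hx)⟩
        · rintro ⟨h1, h2, h3⟩
          have := (hmem x).mpr ⟨h1, h2⟩
          rcases List.mem_append.mp this with h | h
          · exact h
          · exact absurd (List.mem_singleton.mp h) h3
      have h1nd : (u.filter (fun c => decide (c < v))).Nodup := hndu.filter _
      have h1mem : ∀ x, x ∈ u.filter (fun c => decide (c < v)) ↔ 1 ≤ x ∧ x ≤ v - 1 := by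
        intro x
        simp only [List.mem_filter, decide_eq_true_eq, hu_mem x]
        omega
      have h1len : (u.filter (fun c => decide (c < v))).length = v - 1 :=
        length_of_perm_list h1nd h1mem
      have h2nd : ((u.filter (fun c => decide (v < c))).map (fun c => c - v)).Nodup := by
        apply List.Nodup.map_on _ (hndu.filter _)
        intro x hx y hy hxy
        have hx' : v < x := by simpa using List.of_mem_filter hx
        have hy' : v < y := by simpa using List.of_mem_filter hy
        omega
      have h2mem : ∀ y, y ∈ (u.filter (fun c => decide (v < c))).map (fun c => c - v) ↔
          1 ≤ y ∧ y ≤ n - v := by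
        intro y
        simp only [List.mem_map, List.mem_filter, decide_eq_true_eq, hu_mem]
        constructor
        · rintro ⟨x, ⟨⟨h1, h2, h3⟩, h4⟩, rfl⟩
          omega
        · rintro ⟨h1, h2⟩
          exact ⟨y + v, ⟨⟨by omega, by omega, by omega⟩, by omega⟩, by omega⟩
      have h2len : ((u.filter (fun c => decide (v < c))).map (fun c => c - v)).length = n - v :=
        length_of_perm_list h2nd h2mem
      rw [treeOf_concat]
      have e1 := ih _ (by omega) h1nd (fun x => by rw [h1len]; exact h1mem x)
      have e2 := ih _ (by omega) h2nd (fun x => by rw [h2len]; exact h2mem x)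
      simp only [size, e1, e2, h1len, h2len, hn]
      omega

lemma treeOf_size (w : List ℕ) (hnd : w.Nodup) (hmem : ∀ x, x ∈ w ↔ 1 ≤ x ∧ x ≤ w.length) :
    (treeOf w).size = w.length :=
  treeOf_size_aux w.length w le_rfl hnd hmem

end BinTree
namespace BinTree

lemma treeOf_inSub_aux : ∀ (N : ℕ) (w : List ℕ), w.length ≤ N → w.Nodup →
    (∀ x, x ∈ w ↔ 1 ≤ x ∧ x ≤ w.length) → ∀ a b, inSub (treeOf w) a b ↔
      (1 ≤ a ∧ a ≤ w.length ∧ 1 ≤ b ∧ b ≤ w.length ∧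
        ∀ c, min a b ≤ c → c ≤ max a b → c ≠ b →
          List.idxOf c w < List.idxOf b w) := by
  intro N
  induction N with
  | zero =>
    intro w h _ _ a b
    have : w = [] := List.eq_nil_of_length_eq_zero (by omega)
    subst this
    rw [treeOf_nil]
    simp only [inSub, List.length_nil]
    constructor
    · intro h; exact h.elim
    · rintro ⟨h1, h2, _⟩; omega
  | succ N ih =>
    intro w hlen hnd hmem a b
    rcases List.eq_nil_or_concat w with rfl | ⟨u, v, huv⟩
    · rw [treeOf_nil]
      simp only [inSub, List.length_nil]
      constructor
      · intro h; exact h.elim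
      · rintro ⟨h1, h2, _⟩; omega
    · rw [List.concat_eq_append] at huv
      subst huv
      simp only [List.length_append, List.length_singleton] at hlen hmem ⊢
      -- basic facts
      have hv : 1 ≤ v ∧ v ≤ u.length + 1 := (hmem v).mp (by simp)
      rw [List.nodup_append] at hnd
      have hndu : u.Nodup := hnd.1
      have hvu : v ∉ u := fun hc => hnd.2.2 v hc v (List.mem_singleton.mpr rfl) rfl
      have hu_mem : ∀ x, x ∈ u ↔ (1 ≤ x ∧ x ≤ u.length + 1 ∧ x ≠ v) := by
        intro x
        constructor
        · intro hx
          have := (hmem x).mp (by simp [hx])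
          exact ⟨this.1, this.2, fun h => hvu (h ▸ hx)⟩
        · rintro ⟨h1, h2, h3⟩
          have := (hmem x).mpr ⟨h1, h2⟩
          rcases List.mem_append.mp this with h | h
          · exact h
          · exact absurd (List.mem_singleton.mp h) h3
      -- the two filtered lists
      have h1nd : (u.filter (fun c => decide (c < v))).Nodup := hndu.filter _
      have h1mem : ∀ x, x ∈ u.filter (fun c => decide (c < v)) ↔ 1 ≤ x ∧ x ≤ v - 1 := by
        intro x
        simp only [List.mem_filter, decide_eq_true_eq, hu_mem x]
        omega
      have h1len : (u.filter (fun c => decide (c < v))).length = v - 1 :=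
        length_of_perm_list h1nd h1mem
      have h2nd : ((u.filter (fun c => decide (v < c))).map (fun c => c - v)).Nodup := by
        apply List.Nodup.map_on _ (hndu.filter _)
        intro x hx y hy hxy
        have hx' : v < x := by simpa using List.of_mem_filter hx
        have hy' : v < y := by simpa using List.of_mem_filter hy
        omega
      have h2mem : ∀ y, y ∈ (u.filter (fun c => decide (v < c))).map (fun c => c - v) ↔
          1 ≤ y ∧ y ≤ u.length + 1 - v := by
        intro y
        simp only [List.mem_map, List.mem_filter, decide_eq_true_eq, hu_mem]
        constructor
        · rintro ⟨x, ⟨⟨h1, h2, h3⟩, h4⟩, rfl⟩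
          omega
        · rintro ⟨h1, h2⟩
          exact ⟨y + v, ⟨⟨by omega, by omega, by omega⟩, by omega⟩, by omega⟩
      have h2len : ((u.filter (fun c => decide (v < c))).map (fun c => c - v)).length =
          u.length + 1 - v := length_of_perm_list h2nd h2mem
      -- index facts
      have hidxv : List.idxOf v (u ++ [v]) = u.length := by
        rw [List.idxOf_append_of_notMem hvu]
        simp
      have hidxu : ∀ c ∈ u, List.idxOf c (u ++ [v]) = List.idxOf c u :=
        fun c hc => List.idxOf_append_of_mem hc
      have hidxu_lt : ∀ c ∈ u, List.idxOf c (u ++ [v]) < u.length := fun c hc => by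
        rw [hidxu c hc]
        exact List.idxOf_lt_length_iff.mpr hc
      have htrans1 : ∀ c d, c ∈ u.filter (fun c => decide (c < v)) →
          d ∈ u.filter (fun c => decide (c < v)) →
          (List.idxOf c (u.filter (fun c => decide (c < v))) <
            List.idxOf d (u.filter (fun c => decide (c < v))) ↔
            List.idxOf c (u ++ [v]) < List.idxOf d (u ++ [v])) := by
        intro c d hc hd
        rw [hidxu c (List.mem_of_mem_filter hc), hidxu d (List.mem_of_mem_filter hd)]
        exact filter_indexOf_lt _ u c d hc hd
      have hq_all : ∀ x ∈ u.filter (fun c => decide (v < c)), v < x := by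
        intro x hx
        simpa using List.of_mem_filter hx
      have htrans2 : ∀ c d, v < c → v < d → c ∈ u.filter (fun c => decide (v < c)) →
          d ∈ u.filter (fun c => decide (v < c)) →
          (List.idxOf (c - v) ((u.filter (fun c => decide (v < c))).map (fun c => c - v)) <
            List.idxOf (d - v) ((u.filter (fun c => decide (v < c))).map (fun c => c - v)) ↔
            List.idxOf c (u ++ [v]) < List.idxOf d (u ++ [v])) := by
        intro c d hc1 hd1 hc hd
        rw [map_sub_indexOf v _ c hq_all hc1, map_sub_indexOf v _ d hq_all hd1,
          hidxu c (List.mem_of_mem_filter hc), hidxu d (List.mem_of_mem_filter hd)]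
        exact filter_indexOf_lt _ u c d hc hd
      -- the induction hypotheses, restated
      have IH1 : ∀ a b, inSub (treeOf (u.filter (fun c => decide (c < v)))) a b ↔
          (1 ≤ a ∧ a ≤ v - 1 ∧ 1 ≤ b ∧ b ≤ v - 1 ∧
            ∀ c, min a b ≤ c → c ≤ max a b → c ≠ b →
              List.idxOf c (u.filter (fun c => decide (c < v))) <
                List.idxOf b (u.filter (fun c => decide (c < v)))) := by
        intro a b
        have := ih _ (by omega) h1nd (fun x => by rw [h1len]; exact h1mem x) a b
        rwa [h1len] at this
      have IH2 : ∀ a b,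
          inSub (treeOf ((u.filter (fun c => decide (v < c))).map (fun c => c - v))) a b ↔
          (1 ≤ a ∧ a ≤ u.length + 1 - v ∧ 1 ≤ b ∧ b ≤ u.length + 1 - v ∧
            ∀ c, min a b ≤ c → c ≤ max a b → c ≠ b →
              List.idxOf c ((u.filter (fun c => decide (v < c))).map (fun c => c - v)) <
                List.idxOf b ((u.filter (fun c => decide (v < c))).map (fun c => c - v))) := by
        intro a b
        have := ih _ (by omega) h2nd (fun x => by rw [h2len]; exact h2mem x) a b
        rwa [h2len] at this
      -- sizes
      have e1 : (treeOf (u.filter (fun c => decide (c < v)))).size = v - 1 := by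
        rw [treeOf_size _ h1nd (fun x => by rw [h1len]; exact h1mem x)]
        exact h1len
      have e2 : (treeOf ((u.filter (fun c => decide (v < c))).map (fun c => c - v))).size =
          u.length + 1 - v := by
        rw [treeOf_size _ h2nd (fun x => by rw [h2len]; exact h2mem x)]
        exact h2len
      rw [treeOf_concat]
      simp only [inSub, e1, e2]
      rw [show v - 1 + 1 = v by omega]
      constructor
      · rintro (⟨hb, ha1, ha2⟩ | hsub | ⟨ha, hb, hsub⟩)
        · -- b is the root v
          subst hb
          refine ⟨by omega, by omega, by omega, by omega, ?_⟩
          intro c hc1 hc2 hcb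
          have hcu : c ∈ u := (hu_mem c).mpr ⟨by omega, by omega, by omega⟩
          have := hidxu_lt c hcu
          rw [hidxv]
          omega
        · -- b in the left subtree
          obtain ⟨q1, q2, q3, q4, q5⟩ := (IH1 a b).mp hsub
          refine ⟨q1, by omega, q3, by omega, ?_⟩
          intro c hc1 hc2 hcb
          have hcmem : c ∈ u.filter (fun c => decide (c < v)) := (h1mem c).mpr ⟨by omega, by omega⟩
          have hbmem : b ∈ u.filter (fun c => decide (c < v)) := (h1mem b).mpr ⟨by omega, by omega⟩
          exact (htrans1 c b hcmem hbmem).mp (q5 c hc1 hc2 hcb)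
        · -- b in the right subtree
          obtain ⟨q1, q2, q3, q4, q5⟩ := (IH2 _ _).mp hsub
          refine ⟨by omega, by omega, by omega, by omega, ?_⟩
          intro c hc1 hc2 hcb
          have hcv : v < c := by omega
          have hcmem : c ∈ u.filter (fun c => decide (v < c)) :=
            List.mem_filter.mpr ⟨(hu_mem c).mpr ⟨by omega, by omega, by omega⟩, by
              simpa using hcv⟩
          have hbmem : b ∈ u.filter (fun c => decide (v < c)) :=
            List.mem_filter.mpr ⟨(hu_mem b).mpr ⟨by omega, by omega, by omega⟩, by
              simpa using hb⟩
          refine (htrans2 c b hcv hb hcmem hbmem).mp ?_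
          have := q5 (c - v) (by omega) (by omega) (by omega)
          exact this
      · rintro ⟨ha1, ha2, hb1, hb2, hfc⟩
        rcases lt_trichotomy b v with hbv | hbv | hbv
        · -- b in the left subtree
          have hav : a < v := by
            by_contra hcon
            push_neg at hcon
            have h1 := hfc v (by omega) (by omega) (by omega)
            rw [hidxv] at h1
            have hbu : b ∈ u := (hu_mem b).mpr ⟨by omega, by omega, by omega⟩
            have h2 := hidxu_lt b hbu
            omega
          refine Or.inr (Or.inl ((IH1 a b).mpr ⟨ha1, by omega, hb1, by omega, ?_⟩))
          intro c hc1 hc2 hcb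
          have hcmem : c ∈ u.filter (fun c => decide (c < v)) := (h1mem c).mpr ⟨by omega, by omega⟩
          have hbmem : b ∈ u.filter (fun c => decide (c < v)) := (h1mem b).mpr ⟨by omega, by omega⟩
          exact (htrans1 c b hcmem hbmem).mpr (hfc c hc1 hc2 hcb)
        · -- b is the root
          exact Or.inl ⟨by omega, by omega, by omega⟩
        · -- b in the right subtree
          have hav : v < a := by
            by_contra hcon
            push_neg at hcon
            have h1 := hfc v (by omega) (by omega) (by omega)
            rw [hidxv] at h1
            have hbu : b ∈ u := (hu_mem b).mpr ⟨by omega, by omega, by omega⟩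
            have h2 := hidxu_lt b hbu
            omega
          refine Or.inr (Or.inr ⟨hav, hbv, (IH2 _ _).mpr
            ⟨by omega, by omega, by omega, by omega, ?_⟩⟩)
          intro c' hc1 hc2 hcb
          have hbmem : b ∈ u.filter (fun c => decide (v < c)) :=
            List.mem_filter.mpr ⟨(hu_mem b).mpr ⟨by omega, by omega, by omega⟩, by
              simpa using hbv⟩
          have hcmem : c' + v ∈ u.filter (fun c => decide (v < c)) :=
            List.mem_filter.mpr ⟨(hu_mem (c' + v)).mpr ⟨by omega, by omega, by omega⟩, by
              simp; omega⟩
          have key := hfc (c' + v) (by omega) (by omega) (by omega)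
          have := (htrans2 (c' + v) b (by omega) hbv hcmem hbmem).mpr key
          rwa [show c' + v - v = c' by omega] at this

lemma treeOf_inSub (w : List ℕ) (hnd : w.Nodup)
    (hmem : ∀ x, x ∈ w ↔ 1 ≤ x ∧ x ≤ w.length) (a b : ℕ) :
    inSub (treeOf w) a b ↔
      (1 ≤ a ∧ a ≤ w.length ∧ 1 ≤ b ∧ b ≤ w.length ∧
        ∀ c, min a b ≤ c → c ≤ max a b → c ≠ b →
          List.idxOf c w < List.idxOf b w) :=
  treeOf_inSub_aux w.length w le_rfl hnd hmem a b

end BinTree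
/-- For every binary tree `T` of size `n`, a permutation `σ` of `{1,…,n}` is a
linear extension of the increasing forest `inc(T)` iff it is a linear extension of the
binary search tree poset of some binary tree `T'` of size `n` with `T' ≤ T` in the Tamari
order: `ExtL(inc(T)) = ⋃_{T' ≤ T} ExtL(T')`. -/
theorem linExt_incForest (T : BinTree) (σ : Equiv.Perm (Fin T.size)) :
    IsLinExt T.size (incRel T) σ ↔
      ∃ T' : BinTree, T'.size = T.size ∧ TamariLE T' T ∧ IsLinExt T.size (bstRel T') σ := by
  constructor
  · intro h
    classical
    set w : List ℕ := List.ofFn (fun i : Fin T.size => (σ i : ℕ) + 1) with hw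
    have hlw : w.length = T.size := List.length_ofFn
    have hnd : w.Nodup := by
      rw [hw]
      refine List.nodup_ofFn.mpr ?_
      intro i j hij
      simp only at hij
      have : (σ i : ℕ) = (σ j : ℕ) := by omega
      exact σ.injective (Fin.val_injective this)
    have hmemw : ∀ x, x ∈ w ↔ 1 ≤ x ∧ x ≤ w.length := by
      intro x
      rw [hlw, hw]
      constructor
      · intro hx
        obtain ⟨i, hi⟩ := (List.mem_ofFn).mp hx
        have h2 := (σ i).isLt
        have : (σ i : ℕ) + 1 = x := hi
        omega
      · rintro ⟨h1, h2⟩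
        refine (List.mem_ofFn).mpr ⟨σ.symm ⟨x - 1, by omega⟩, ?_⟩
        show (σ (σ.symm ⟨x - 1, by omega⟩) : ℕ) + 1 = x
        rw [Equiv.apply_symm_apply]
        show x - 1 + 1 = x
        omega
    have hidx : ∀ i : Fin T.size, List.idxOf ((σ i : ℕ) + 1) w = (i : ℕ) := by
      intro i
      have hnd' : (List.ofFn fun k : Fin T.size => (σ k : ℕ) + 1).Nodup := by
        rw [← hw]; exact hnd
      have hi : (i : ℕ) < (List.ofFn fun k : Fin T.size => (σ k : ℕ) + 1).length := by
        simp
      have h1 : (List.ofFn fun k : Fin T.size => (σ k : ℕ) + 1)[(i : ℕ)] = (σ i : ℕ) + 1 := by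
        simp
      have h2 := List.Nodup.idxOf_getElem hnd' (i : ℕ) hi
      rw [h1] at h2
      rw [hw]
      exact h2
    have hsz : (treeOf w).size = T.size := by rw [treeOf_size w hnd hmemw, hlw]
    have hchar := treeOf_inSub w hnd hmemw
    have hlsz : ∀ b, lsz T b ≤ lsz (treeOf w) b := by
      intro b
      rcases Nat.eq_zero_or_pos (lsz T b) with h0 | h0
      · omega
      have hb1 : 1 ≤ b := by
        rcases Nat.eq_zero_or_pos b with rfl | hp
        · rw [lsz_zero] at h0; omega
        · exact hp
      have hb2 : b ≤ T.size := by
        by_contra hcon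
        push_neg at hcon
        rw [lsz_out T b hcon] at h0
        omega
      have hblt := lsz_lt T b hb1 hb2
      have hsub : inSub (treeOf w) (b - lsz T b) b := by
        rw [hchar, hlw]
        refine ⟨by omega, by omega, by omega, by omega, ?_⟩
        intro c hc1 hc2 hcb
        have hcb' : c < b := by omega
        have hc1' : 1 ≤ c := by omega
        have hinc : incRel T c b := (incRel_iff T c b).mpr ⟨by omega, by omega, hb2, by omega⟩
        set i := σ.symm ⟨c - 1, by omega⟩ with hi
        set j := σ.symm ⟨b - 1, by omega⟩ with hj
        have hieq : (σ i : ℕ) + 1 = c := by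
          rw [hi, Equiv.apply_symm_apply]
          show c - 1 + 1 = c
          omega
        have hjeq : (σ j : ℕ) + 1 = b := by
          rw [hj, Equiv.apply_symm_apply]
          show b - 1 + 1 = b
          omega
        have hij : i < j := h i j (by rw [hieq, hjeq]; exact hinc)
        rw [← hieq, ← hjeq, hidx i, hidx j]
        exact hij
      have hiff := (inSub_iff (treeOf w) (b - lsz T b) b).mp hsub
      have hlt2 : lsz (treeOf w) b < b := lsz_lt (treeOf w) b hb1 (by omega)
      omega
    refine ⟨treeOf w, hsz, tamari_of_lsz_le T (treeOf w) hsz.symm hlsz, ?_⟩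
    intro i j hrel
    obtain ⟨hne, hsub⟩ := hrel
    rw [hchar] at hsub
    obtain ⟨q1, q2, q3, q4, q5⟩ := hsub
    have h5 := q5 ((σ i : ℕ) + 1) (by omega) (by omega) hne
    rw [hidx i, hidx j] at h5
    exact h5
  · rintro ⟨T', hsize, htam, hlin⟩
    intro i j hrel
    have hls := tamari_lsz htam ((σ j : ℕ) + 1)
    have hsz := tamari_size htam
    rw [incRel_iff] at hrel
    apply hlin i j
    refine ⟨by omega, ?_⟩
    rw [inSub_iff]
    refine ⟨by omega, by omega, by omega, by omega, by omega⟩
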